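/- Let (𝒳, Σ) be a measurable space with a probability measure μ, let E ⊆ 𝒳 be a measurable set, let y : 𝒳 → ℝ be measurable and integrable with respect to μ, and let (y_n)_{n ∈ ℕ} be a sequence of measurable functions 𝒳 → ℝ, each integrable with respect to μ. Suppose there exist constants C̃, Ĉ with 0 ≤ C̃ < 1, 0 ≤ Ĉ < 1, and K ≥ 1 such that for every n: |∫_{𝒳∖E} (y − y_n) dμ| ≤ C̃ · |∫_E (y − y_n) dμ|, ∫_{𝒳∖E} |y − y_n| dμ ≤ Ĉ · ∫_E |y − y_n| dμ, and ∫_E |y_n − y| dμ ≤ K · |∫_E (y_n − y) dμ|. If W₁(y_n♯μ, y♯μ) → 0 as n → ∞, then y_n converges to y in probability with respect to μ; that is, for every t > 0, μ({x ∈ 𝒳 : |y_n(x) − y(x)| ≥ t}) → 0 as n → ∞. -/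

import Mathlib

open MeasureTheory
open scoped ENNReal

/-- A coupling of two probability measures on `ℝ` is a measure on `ℝ × ℝ`
whose first marginal is `ν₁` and whose second marginal is `ν₂`. -/
def IsCoupling (γ : Measure (ℝ × ℝ)) (ν₁ ν₂ : Measure ℝ) : Prop :=
  γ.map Prod.fst = ν₁ ∧ γ.map Prod.snd = ν₂

/-- The 1-Wasserstein distance between two measures on `ℝ`:
the infimum over all couplings `γ` of `∫ |a - b| dγ(a, b)`. -/
noncomputable def W1 (ν₁ ν₂ : Measure ℝ) : ℝ≥0∞ :=
  ⨅ (γ : Measure (ℝ × ℝ)) (_ : IsCoupling γ ν₁ ν₂), ∫⁻ q, edist q.1 q.2 ∂γ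

open Filter

/-- If a sequence of uniformly data-consistent estimators converges to the truth in
1-Wasserstein distance of the push-forwards, then it converges in probability. -/
theorem tendsto_in_probability_of_w1_tendsto_zero
    {𝒳 : Type*} [MeasurableSpace 𝒳] (μ : Measure 𝒳) [IsProbabilityMeasure μ]
    (E : Set 𝒳) (hE : MeasurableSet E)
    (y : 𝒳 → ℝ) (Y : ℕ → 𝒳 → ℝ)
    (hy : Measurable y) (hY : ∀ n, Measurable (Y n))
    (hiy : Integrable y μ) (hiY : ∀ n, Integrable (Y n) μ)
    (Ct Ch K : ℝ) (hCt0 : 0 ≤ Ct) (hCt1 : Ct < 1) (hCh0 : 0 ≤ Ch) (hCh1 : Ch < 1)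
    (hK : 1 ≤ K)
    (hsigned : ∀ n, |∫ x in Eᶜ, (y x - Y n x) ∂μ| ≤ Ct * |∫ x in E, (y x - Y n x) ∂μ|)
    (habs : ∀ n, ∫ x in Eᶜ, |y x - Y n x| ∂μ ≤ Ch * ∫ x in E, |y x - Y n x| ∂μ)
    (hnc : ∀ n, ∫ x in E, |Y n x - y x| ∂μ ≤ K * |∫ x in E, (Y n x - y x) ∂μ|)
    (hW : Tendsto (fun n => W1 (μ.map (Y n)) (μ.map y)) atTop (nhds 0)) :
    ∀ t : ℝ, 0 < t →
      Tendsto (fun n => μ {x | t ≤ |Y n x - y x|}) atTop (nhds 0) := by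
  intro t ht
  set S : ℕ → ℝ := fun n => ∫ x, (Y n x - y x) ∂μ with hSdef
  have hgint : ∀ n, Integrable (fun x => Y n x - y x) μ := fun n => (hiY n).sub hiy
  -- Step 1 : ofReal |S n| ≤ W1
  have hSle : ∀ n, ENNReal.ofReal |S n| ≤ W1 (μ.map (Y n)) (μ.map y) := by
    intro n
    refine le_iInf fun γ => le_iInf fun hγ => ?_
    obtain ⟨h1, h2⟩ := hγ
    have hfst : Integrable (fun q : ℝ × ℝ => q.1) γ := by
      have h : Integrable (id : ℝ → ℝ) (γ.map Prod.fst) := by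
        rw [h1]
        exact (integrable_map_measure aestronglyMeasurable_id (hY n).aemeasurable).mpr (hiY n)
      exact (integrable_map_measure aestronglyMeasurable_id measurable_fst.aemeasurable).mp h
    have hsnd : Integrable (fun q : ℝ × ℝ => q.2) γ := by
      have h : Integrable (id : ℝ → ℝ) (γ.map Prod.snd) := by
        rw [h2]
        exact (integrable_map_measure aestronglyMeasurable_id hy.aemeasurable).mpr hiy
      exact (integrable_map_measure aestronglyMeasurable_id measurable_snd.aemeasurable).mp h
    have hef : ∫ q : ℝ × ℝ, q.1 ∂γ = ∫ x, Y n x ∂μ := by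
      have e1 : ∫ a : ℝ, a ∂(γ.map Prod.fst) = ∫ q : ℝ × ℝ, q.1 ∂γ :=
        integral_map measurable_fst.aemeasurable aestronglyMeasurable_id
      have e2 : ∫ a : ℝ, a ∂(μ.map (Y n)) = ∫ x, Y n x ∂μ :=
        integral_map (hY n).aemeasurable aestronglyMeasurable_id
      rw [h1] at e1; rw [← e1, e2]
    have hes : ∫ q : ℝ × ℝ, q.2 ∂γ = ∫ x, y x ∂μ := by
      have e1 : ∫ a : ℝ, a ∂(γ.map Prod.snd) = ∫ q : ℝ × ℝ, q.2 ∂γ :=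
        integral_map measurable_snd.aemeasurable aestronglyMeasurable_id
      have e2 : ∫ a : ℝ, a ∂(μ.map y) = ∫ x, y x ∂μ :=
        integral_map hy.aemeasurable aestronglyMeasurable_id
      rw [h2] at e1; rw [← e1, e2]
    have hSf : S n = ∫ q : ℝ × ℝ, (q.1 - q.2) ∂γ := by
      rw [integral_sub hfst hsnd, hef, hes, hSdef]
      simp [integral_sub (hiY n) hiy]
    have hintf : Integrable (fun q : ℝ × ℝ => q.1 - q.2) γ := hfst.sub hsnd
    have h1' : |S n| ≤ ∫ q : ℝ × ℝ, |q.1 - q.2| ∂γ := by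
      rw [hSf]
      simpa [Real.norm_eq_abs] using
        MeasureTheory.norm_integral_le_integral_norm (μ := γ) (fun q : ℝ × ℝ => q.1 - q.2)
    calc ENNReal.ofReal |S n| ≤ ENNReal.ofReal (∫ q : ℝ × ℝ, |q.1 - q.2| ∂γ) :=
          ENNReal.ofReal_le_ofReal h1'
      _ = ∫⁻ q : ℝ × ℝ, ENNReal.ofReal |q.1 - q.2| ∂γ :=
          ofReal_integral_eq_lintegral_ofReal hintf.abs (ae_of_all _ fun q => abs_nonneg _)
      _ = ∫⁻ q : ℝ × ℝ, edist q.1 q.2 ∂γ := by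
          simp [edist_dist, Real.dist_eq]
  -- Step 2 : |S n| → 0
  have hS0 : Tendsto (fun n => |S n|) atTop (nhds 0) := by
    have h0 : Tendsto (fun n => ENNReal.ofReal |S n|) atTop (nhds 0) :=
      tendsto_of_tendsto_of_tendsto_of_le_of_le tendsto_const_nhds hW
        (fun n => zero_le) hSle
    have h1 := (ENNReal.tendsto_toReal (a := 0) (by simp)).comp h0
    have h2 : (ENNReal.toReal ∘ fun n => ENNReal.ofReal |S n|) = fun n => |S n| := by
      funext n; simp [ENNReal.toReal_ofReal (abs_nonneg _)]
    rw [h2] at h1; simpa using h1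
  -- Step 3 : T n ≤ C * |S n|
  set T : ℕ → ℝ := fun n => ∫ x, |Y n x - y x| ∂μ with hTdef
  have hTle : ∀ n, T n ≤ (1 + Ch) * K / (1 - Ct) * |S n| := by
    intro n
    have hgi := hgint n
    have hsplitT : T n = (∫ x in E, |Y n x - y x| ∂μ) + ∫ x in Eᶜ, |Y n x - y x| ∂μ :=
      (integral_add_compl hE hgi.abs).symm
    have hsplitS : S n = (∫ x in E, (Y n x - y x) ∂μ) + ∫ x in Eᶜ, (Y n x - y x) ∂μ :=
      (integral_add_compl hE hgi).symm
    have habs' : ∫ x in Eᶜ, |Y n x - y x| ∂μ ≤ Ch * ∫ x in E, |Y n x - y x| ∂μ := by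
      have := habs n
      simpa [abs_sub_comm] using this
    have hsigned' : |∫ x in Eᶜ, (Y n x - y x) ∂μ| ≤ Ct * |∫ x in E, (Y n x - y x) ∂μ| := by
      have := hsigned n
      have e1 : ∫ x in Eᶜ, (y x - Y n x) ∂μ = -∫ x in Eᶜ, (Y n x - y x) ∂μ := by
        rw [← integral_neg]; congr 1; ext x; ring
      have e2 : ∫ x in E, (y x - Y n x) ∂μ = -∫ x in E, (Y n x - y x) ∂μ := by
        rw [← integral_neg]; congr 1; ext x; ring
      rwa [e1, e2, abs_neg, abs_neg] at this
    set a := ∫ x in E, (Y n x - y x) ∂μ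
    set b := ∫ x in Eᶜ, (Y n x - y x) ∂μ
    have h3 : a = S n - b := by rw [hsplitS]; ring
    have h4 : |a| ≤ |S n| + |b| := h3 ▸ abs_sub _ _
    have hEa : (1 - Ct) * |a| ≤ |S n| := by linarith [hsigned']
    have hAE : ∫ x in E, |Y n x - y x| ∂μ ≤ K * |a| := hnc n
    have hAnn : (0:ℝ) ≤ ∫ x in E, |Y n x - y x| ∂μ :=
      integral_nonneg fun x => abs_nonneg _
    have hT' : T n ≤ (1 + Ch) * (K * |a|) := by
      rw [hsplitT]
      nlinarith [habs', hAE, hAnn, mul_le_mul_of_nonneg_left hAE hCh0]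
    have h1Ct : (0:ℝ) < 1 - Ct := by linarith
    rw [div_mul_eq_mul_div, le_div_iff₀ h1Ct]
    nlinarith [mul_le_mul_of_nonneg_left hEa (show (0:ℝ) ≤ (1 + Ch) * K by nlinarith),
      mul_le_mul_of_nonneg_right hT' h1Ct.le]
  -- T n → 0
  have hT0 : Tendsto T atTop (nhds 0) := by
    have hC : Tendsto (fun n => (1 + Ch) * K / (1 - Ct) * |S n|) atTop (nhds 0) := by
      simpa using hS0.const_mul ((1 + Ch) * K / (1 - Ct))
    exact squeeze_zero (fun n => integral_nonneg fun x => abs_nonneg _) hTle hC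
  -- Step 4 : Markov
  have hmarkov : ∀ n, μ {x | t ≤ |Y n x - y x|} ≤ ENNReal.ofReal (T n) / ENNReal.ofReal t := by
    intro n
    have hae : AEMeasurable (fun x => ENNReal.ofReal |Y n x - y x|) μ :=
      (ENNReal.measurable_ofReal.comp ((hY n).sub hy).abs).aemeasurable
    have hm := mul_meas_ge_le_lintegral₀ hae (ENNReal.ofReal t)
    have hset : {x | ENNReal.ofReal t ≤ ENNReal.ofReal |Y n x - y x|} = {x | t ≤ |Y n x - y x|} := by
      ext x
      simp [ENNReal.ofReal_le_ofReal_iff (abs_nonneg _)]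
    have hlint : ∫⁻ x, ENNReal.ofReal |Y n x - y x| ∂μ = ENNReal.ofReal (T n) :=
      (ofReal_integral_eq_lintegral_ofReal (hgint n).abs (ae_of_all _ fun x => abs_nonneg _)).symm
    rw [hset, hlint] at hm
    rw [ENNReal.le_div_iff_mul_le (Or.inl (by simp [ht])) (Or.inl (by simp))]
    rwa [mul_comm]
  have hub : Tendsto (fun n => ENNReal.ofReal (T n) / ENNReal.ofReal t) atTop (nhds 0) := by
    have h1 : Tendsto (fun n => ENNReal.ofReal (T n)) atTop (nhds 0) := by
      simpa using ENNReal.tendsto_ofReal hT0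
    simpa [div_eq_mul_inv] using
      ENNReal.Tendsto.mul_const h1 (Or.inr (by simpa using ht))
  exact tendsto_of_tendsto_of_tendsto_of_le_of_le tendsto_const_nhds hub
    (fun n => zero_le) hmarkov
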